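/- In the transformation Lie algebra A ⊗_k g of a restricted Lie algebra g acting on a commutative k-algebra A via δ : g → Der_k(A) (char k = p), for every basis element 1⊗g_i one has (ad_{1⊗g_i})^p = ad_{1⊗g_i^{[p]}} on A ⊗_k g; consequently the operators τ(a⊗g) = a ⊗ [g, g_i] and ρ(a⊗g) = δ(g_i)(a) ⊗ g commute and ad_{1⊗g_i} = τ − ρ. -/

import Mathlib

/-- The coefficient of `λ^(i-1)` in `ad_{λx+y}^{p-1}(x)`, written out as a sum over words:
for each subset `S` of the `p-1` bracketing slots of cardinality `i-1`, bracket `x`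
successively with `x` (for slots in `S`) and `y` (for slots not in `S`). -/
def jacCoeff {M : Type*} [AddCommMonoid M] (br : M → M → M) (p : ℕ) (x y : M) (i : ℕ) : M :=
  ∑ S ∈ Finset.univ.filter (fun S : Finset (Fin (p - 1)) => S.card = i - 1),
    (List.ofFn (fun j : Fin (p - 1) => decide (j ∈ S))).foldl
      (fun acc b => br acc (if b then x else y)) x

/-- `pm` is a `p`-map for the bracket `br`, i.e. the three axioms of a restricted
Lie algebra in the sense of Jacobson. -/
def IsPMapOn (k : Type*) {M : Type*} [CommRing k] [AddCommGroup M] [Module k M]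
    (br : M → M → M) (p : ℕ) (pm : M → M) : Prop :=
  (∀ (c : k) (x : M), pm (c • x) = c ^ p • pm x) ∧
  (∀ x y : M, br x (pm y) = (fun w => br w y)^[p] x) ∧
  (∀ x y : M, ∃ s : ℕ → M,
    (∀ i, 1 ≤ i → i ≤ p - 1 → i • s i = jacCoeff br p x y i) ∧
    pm (x + y) = pm x + pm y + ∑ i ∈ Finset.Icc 1 (p - 1), s i)

/-- `br` is a Lie bracket: `k`-bilinear, alternating and satisfying the Leibniz/Jacobi identity. -/
def IsLieBracketOn (k : Type*) {M : Type*} [CommRing k] [AddCommGroup M] [Module k M]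
    (br : M → M → M) : Prop :=
  (∀ x, IsLinearMap k (br x)) ∧ (∀ y, IsLinearMap k (fun x => br x y)) ∧
  (∀ x, br x x = 0) ∧
  (∀ x y z, br x (br y z) = br (br x y) z + br y (br x z))

open scoped TensorProduct

private lemma one_eq_id' {k M : Type*} [CommSemiring k] [AddCommMonoid M] [Module k M] :
    (1 : Module.End k M) = LinearMap.id := rfl

private lemma map_id_pow {k A g : Type*} [CommSemiring k] [AddCommMonoid A] [Module k A]
    [AddCommMonoid g] [Module k g] (f : g →ₗ[k] g) (n : ℕ) :
    (TensorProduct.map (LinearMap.id : A →ₗ[k] A) f) ^ n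
      = TensorProduct.map LinearMap.id (f ^ n) := by
  induction n with
  | zero => rw [pow_zero, pow_zero, one_eq_id', one_eq_id', TensorProduct.map_id]
  | succ n ih =>
    rw [pow_succ, pow_succ, ih]
    rw [show (f ^ n) * f = (f ^ n) ∘ₗ f from rfl,
      show (LinearMap.id : A →ₗ[k] A) = LinearMap.id ∘ₗ LinearMap.id from rfl,
      TensorProduct.map_comp]
    rfl

private lemma map_pow_id {k A g : Type*} [CommSemiring k] [AddCommMonoid A] [Module k A]
    [AddCommMonoid g] [Module k g] (f : A →ₗ[k] A) (n : ℕ) :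
    (TensorProduct.map f (LinearMap.id : g →ₗ[k] g)) ^ n
      = TensorProduct.map (f ^ n) LinearMap.id := by
  induction n with
  | zero => rw [pow_zero, pow_zero, one_eq_id', one_eq_id', TensorProduct.map_id]
  | succ n ih =>
    rw [pow_succ, pow_succ, ih]
    rw [show (f ^ n) * f = (f ^ n) ∘ₗ f from rfl,
      show (LinearMap.id : g →ₗ[k] g) = LinearMap.id ∘ₗ LinearMap.id from rfl,
      TensorProduct.map_comp]
    rfl

/-- In the transformation Lie algebra `A ⊗_k g` (char `k = p`), for a basis element
`1 ⊗ g_i` one has `(ad_{1⊗g_i})^p = ad_{1⊗g_i^{[p]}}`; moreover with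
`τ(a⊗x) = a ⊗ [x, g_i]` and `ρ(a⊗x) = δ(g_i)(a) ⊗ x` one has `τρ = ρτ` and
`ad_{1⊗g_i} = τ − ρ`. -/
theorem stmt_9 (k A g ι : Type*) [Field k] [CommRing A] [Algebra k A]
    [LieRing g] [LieAlgebra k g]
    (p : ℕ) [Fact p.Prime] [CharP k p]
    (b : Module.Basis ι k g)
    (pm : g → g) (hpm : IsPMapOn k (fun x y : g => ⁅x, y⁆) p pm)
    (δ : g →ₗ[k] Derivation k A A)
    (hδLie : ∀ x y : g, δ ⁅x, y⁆ = ⁅δ x, δ y⁆)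
    (hδp : ∀ x : g, ⇑(δ (pm x)) = (⇑(δ x))^[p])
    (br : TensorProduct k A g → TensorProduct k A g → TensorProduct k A g)
    (hbil : IsLieBracketOn k br)
    (hbr : ∀ (a a' : A) (x y : g),
      br (a ⊗ₜ[k] x) (a' ⊗ₜ[k] y) =
        (a * a') ⊗ₜ[k] ⁅x, y⁆ + (a * δ x a') ⊗ₜ[k] y - (a' * δ y a) ⊗ₜ[k] x)
    (i : ι) :
    (∀ u, br u ((1 : A) ⊗ₜ[k] b i) =
        TensorProduct.map LinearMap.id (-(LieAlgebra.ad k g (b i))) u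
          - TensorProduct.map (δ (b i)).toLinearMap LinearMap.id u) ∧
    (∀ u, TensorProduct.map LinearMap.id (-(LieAlgebra.ad k g (b i)))
            (TensorProduct.map (δ (b i)).toLinearMap LinearMap.id u)
        = TensorProduct.map (δ (b i)).toLinearMap LinearMap.id
            (TensorProduct.map LinearMap.id (-(LieAlgebra.ad k g (b i))) u)) ∧
    (∀ u, (fun w => br w ((1 : A) ⊗ₜ[k] b i))^[p] u = br u ((1 : A) ⊗ₜ[k] pm (b i))) := by
  classical
  set gi := b i with hgi
  set τ : TensorProduct k A g →ₗ[k] TensorProduct k A g :=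
    TensorProduct.map LinearMap.id (-(LieAlgebra.ad k g gi)) with hτ
  set ρ : TensorProduct k A g →ₗ[k] TensorProduct k A g :=
    TensorProduct.map (δ gi).toLinearMap LinearMap.id with hρ
  have h1 : ∀ u, br u ((1 : A) ⊗ₜ[k] gi) = τ u - ρ u := by
    intro u
    induction u using TensorProduct.induction_on with
    | zero =>
      rw [(hbil.2.1 _).map_zero, map_zero, map_zero, sub_zero]
    | tmul a x =>
      rw [hbr, hτ, hρ]
      simp only [TensorProduct.map_tmul, LinearMap.id_apply, LinearMap.neg_apply,
        LieAlgebra.ad_apply, Derivation.coeFn_coe, Derivation.map_one_eq_zero, mul_zero, mul_one, one_mul,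
        TensorProduct.tmul_neg, ← lie_skew x gi, TensorProduct.zero_tmul, add_zero]
    | add u v hu hv =>
      rw [(hbil.2.1 _).map_add, hu, hv, map_add, map_add]
      abel
  have hcomm : τ ∘ₗ ρ = ρ ∘ₗ τ := by
    rw [hτ, hρ, ← TensorProduct.map_comp, ← TensorProduct.map_comp]
    simp
  refine ⟨h1, fun u => DFunLike.congr_fun hcomm u, ?_⟩
  -- part 3
  have hfun : (fun w => br w ((1 : A) ⊗ₜ[k] gi)) = ⇑(τ - ρ) := by
    funext w; rw [h1 w]; simp
  intro u
  rw [hfun, ← Module.End.pow_apply]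
  -- compute (τ - ρ)^p
  rcases subsingleton_or_nontrivial (TensorProduct k A g) with hs | hs
  · exact Subsingleton.elim _ _
  · have hinj : Function.Injective (algebraMap k (Module.End k (TensorProduct k A g))) := by
      intro c c' hcc
      obtain ⟨m, hm⟩ := exists_ne (0 : TensorProduct k A g)
      have h2 := congrArg (fun f => f m) hcc
      simp only [Module.algebraMap_end_apply] at h2
      exact smul_left_injective k hm h2
    haveI : CharP (Module.End k (TensorProduct k A g)) p := charP_of_injective_algebraMap hinj p
    have hc : Commute τ ρ := hcomm
    rw [sub_pow_char_of_commute p hc]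
    have hτp : τ ^ p = TensorProduct.map LinearMap.id ((-(LieAlgebra.ad k g gi)) ^ p) :=
      map_id_pow _ p
    have hρp : ρ ^ p = TensorProduct.map ((δ gi).toLinearMap ^ p) LinearMap.id :=
      map_pow_id _ p
    rw [LinearMap.sub_apply, hτp, hρp]
    -- now prove by induction on u
    induction u using TensorProduct.induction_on with
    | zero => rw [map_zero, map_zero, sub_zero, (hbil.2.1 _).map_zero]
    | tmul a x =>
      rw [hbr]
      have hlie : ⁅x, pm gi⁆ = ((-(LieAlgebra.ad k g gi)) ^ p) x := by
        have h3 : ⁅x, pm gi⁆ = (fun w => ⁅w, gi⁆)^[p] x := hpm.2.1 x gi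
        have h4 : (fun w => ⁅w, gi⁆) = ⇑(-(LieAlgebra.ad k g) gi) := by
          funext w
          rw [LinearMap.neg_apply, LieAlgebra.ad_apply]
          exact (lie_skew w gi).symm
        rw [h3, h4, ← Module.End.pow_apply]
      have hder : δ (pm gi) a = ((δ gi).toLinearMap ^ p) a := by
        rw [Module.End.pow_apply]
        exact congrFun (hδp gi) a
      simp only [TensorProduct.map_tmul, LinearMap.id_apply, Derivation.coeFn_coe,
        Derivation.map_one_eq_zero, mul_zero, mul_one, one_mul, TensorProduct.zero_tmul,
        add_zero, hlie, hder]
    | add u v hu hv =>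
      rw [map_add, map_add, (hbil.2.1 _).map_add, ← hu, ← hv]
      abel
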